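/- For each r ≥ 3 and n ≥ (r-1)·2^{r-1} + 4, if G is a graph on n vertices with minimum degree δ(G) ≥ ⌊n/2⌋ + (r-3), then G contains a copy of the complete bipartite graph K_{r, r-1}, i.e. there exist disjoint vertex sets S of size r and T of size r-1 with every vertex of S adjacent to every vertex of T. -/

import Mathlib

open Finset

open scoped Classical

noncomputable section

variable {V : Type*}

/-- Number of neighbours of `v` inside the set `A`. -/
def nbrsIn (G : SimpleGraph V) (A : Finset V) (v : V) : ℕ :=
  (A.filter (fun u => G.Adj v u)).card

/-- One step of the `r`-neighbour bootstrap process. -/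
def bootStep [Fintype V] (G : SimpleGraph V) (r : ℕ) (A : Finset V) : Finset V :=
  A ∪ Finset.univ.filter (fun v => r ≤ nbrsIn G A v)

/-- The sets `A_t` of the `r`-neighbour bootstrap process started at `A`. -/
def bootSeq [Fintype V] (G : SimpleGraph V) (r : ℕ) (A : Finset V) : ℕ → Finset V
  | 0 => A
  | t + 1 => bootStep G r (bootSeq G r A t)

/-- `A` is closed under the `r`-neighbour bootstrap rule. -/
def BootClosed (G : SimpleGraph V) (r : ℕ) (A : Finset V) : Prop :=
  ∀ v, r ≤ nbrsIn G A v → v ∈ A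

/-- The `r`-neighbour bootstrap closure `⟨A⟩_r`: the smallest closed superset of `A`. -/
def bootClosure [Fintype V] (G : SimpleGraph V) (r : ℕ) (A : Finset V) : Finset V :=
  Finset.univ.filter (fun v => ∀ B : Finset V, A ⊆ B → BootClosed G r B → v ∈ B)

/-- `m(G, r)`: the minimum size of a percolating set. -/
def minPerc [Fintype V] (G : SimpleGraph V) (r : ℕ) : ℕ :=
  sInf {k | ∃ A : Finset V, A.card = k ∧ bootClosure G r A = Finset.univ}

end


private lemma sum_nbrsIn_ge {V : Type*} [Fintype V] (G : SimpleGraph V) (A : Finset V) :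
    A.card * G.minDegree ≤ ∑ v ∈ univ, ((A.filter (fun u => G.Adj v u)).card) := by
  have h1 : ∑ v ∈ (univ : Finset V), (A.filter (fun u => G.Adj v u)).card
      = ∑ u ∈ A, G.degree u := by
    simp_rw [Finset.card_filter]
    rw [Finset.sum_comm]
    refine Finset.sum_congr rfl fun u hu => ?_
    rw [← Finset.card_filter]
    rw [show (univ.filter fun v => G.Adj v u) = univ.filter (G.Adj u) by
      apply Finset.filter_congr; intro v _; simp [G.adj_comm]]
    rw [← SimpleGraph.neighborFinset_eq_filter]
    rfl
  rw [h1]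
  calc A.card * G.minDegree = ∑ _u ∈ A, G.minDegree := by
        rw [Finset.sum_const, smul_eq_mul, mul_comm]
    _ ≤ ∑ u ∈ A, G.degree u := Finset.sum_le_sum fun u _ => G.minDegree_le_degree u

private lemma numeric_ineq (r n d δ : ℕ) (hr : 3 ≤ r)
    (hd : (r - 1) * 2 ^ (r - 2) + 2 ≤ d) (h2d : n ≤ 2 * d + 1) (hn : 4 ≤ n)
    (hδ : d + (r - 3) ≤ δ) :
    (r - 1) * ∏ j ∈ Finset.range (r - 1), (n - j)
      < n * ∏ j ∈ Finset.range (r - 1), (δ - j) := by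
  have hd2 : 2 ≤ d := le_trans (Nat.le_add_left 2 _) hd
  have hsplit : r - 1 = (r - 2) + 1 := by omega
  have hA : d ^ (r - 2) * (d - 1) ≤ ∏ j ∈ Finset.range (r - 1), (δ - j) := by
    rw [hsplit, Finset.prod_range_succ]
    have hfirst : d ^ (r - 2) ≤ ∏ j ∈ Finset.range (r - 2), (δ - j) := by
      calc d ^ (r - 2) = ∏ _j ∈ Finset.range (r - 2), d := by
            rw [Finset.prod_const, Finset.card_range]
        _ ≤ ∏ j ∈ Finset.range (r - 2), (δ - j) := by
            apply Finset.prod_le_prod (fun _ _ => Nat.zero_le _)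
            intro j hj
            rw [Finset.mem_range] at hj
            omega
    have hlast : d - 1 ≤ δ - (r - 2) := by omega
    exact Nat.mul_le_mul hfirst hlast
  have hB : ∏ j ∈ Finset.range (r - 1), (n - j) ≤ (2 * d) ^ (r - 2) * n := by
    rw [hsplit, Finset.prod_range_succ']
    have : ∏ i ∈ Finset.range (r - 2), (n - (i + 1)) ≤ (2 * d) ^ (r - 2) := by
      calc ∏ i ∈ Finset.range (r - 2), (n - (i + 1))
          ≤ ∏ _i ∈ Finset.range (r - 2), (2 * d) := by
            apply Finset.prod_le_prod (fun _ _ => Nat.zero_le _)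
            intro j hj; omega
        _ = (2 * d) ^ (r - 2) := by rw [Finset.prod_const, Finset.card_range]
    exact Nat.mul_le_mul this (by omega)
  have hdpos : 0 < d ^ (r - 2) := Nat.pow_pos (by omega)
  have hkey : (r - 1) * ((2 * d) ^ (r - 2) * n) < n * (d ^ (r - 2) * (d - 1)) := by
    have e1 : (r - 1) * ((2 * d) ^ (r - 2) * n) = n * (((r - 1) * 2 ^ (r - 2)) * d ^ (r - 2)) := by
      rw [mul_pow]; ring
    rw [e1]
    apply mul_lt_mul_of_pos_left _ (show 0 < n by omega)
    calc (r - 1) * 2 ^ (r - 2) * d ^ (r - 2) < (d - 1) * d ^ (r - 2) := by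
          apply mul_lt_mul_of_pos_right _ hdpos
          omega
      _ = d ^ (r - 2) * (d - 1) := by ring
  calc (r - 1) * ∏ j ∈ Finset.range (r - 1), (n - j)
      ≤ (r - 1) * ((2 * d) ^ (r - 2) * n) := Nat.mul_le_mul (le_refl _) hB
    _ < n * (d ^ (r - 2) * (d - 1)) := hkey
    _ ≤ n * ∏ j ∈ Finset.range (r - 1), (δ - j) := Nat.mul_le_mul (le_refl _) hA

theorem stmt_6 {V : Type*} [Fintype V] (G : SimpleGraph V) (r n : ℕ)
    (hr : 3 ≤ r) (hn : Fintype.card V = n) (hbig : (r - 1) * 2 ^ (r - 1) + 4 ≤ n)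
    (hδ : n / 2 + (r - 3) ≤ G.minDegree) :
    ∃ S T : Finset V, Disjoint S T ∧ S.card = r ∧ T.card = r - 1 ∧
      ∀ s ∈ S, ∀ t ∈ T, G.Adj s t := by
  classical
  set δ := G.minDegree with hδdef
  -- basic size facts
  have hpow4 : 4 ≤ 2 ^ (r - 1) := by
    calc (4 : ℕ) = 2 ^ 2 := rfl
      _ ≤ 2 ^ (r - 1) := Nat.pow_le_pow_right (by norm_num) (by omega)
  have hmul : 2 * 4 ≤ (r - 1) * 2 ^ (r - 1) := Nat.mul_le_mul (by omega) hpow4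
  have hn12 : 12 ≤ n := by omega
  have hnr : r + 3 ≤ n := by
    have h1 : r - 1 ≤ (r - 1) * 2 ^ (r - 1) :=
      Nat.le_mul_of_pos_right _ (Nat.pow_pos (by norm_num))
    omega
  have hδbig : n / 2 + (r - 3) ≤ δ := hδ
  have hn2 : 6 ≤ n / 2 := by omega
  have hδr : r + 3 ≤ δ := by omega
  -- the key greedy construction
  have key : ∀ k, k ≤ r - 1 → ∃ T : Finset V, T.card = k ∧
      n * ∏ j ∈ range k, (δ - j) ≤
        (univ.filter (fun v => ∀ t ∈ T, G.Adj t v)).card * ∏ j ∈ range k, (n - j) := by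
    intro k hk
    induction k with
    | zero =>
      refine ⟨∅, rfl, ?_⟩
      simp [hn]
    | succ k ih =>
      obtain ⟨T, hTc, hTinv⟩ := ih (by omega)
      set A := univ.filter (fun v => ∀ t ∈ T, G.Adj t v) with hA
      have hTsub : T ⊆ univ := subset_univ T
      have hcompl : (univ \ T).card = n - k := by
        rw [card_sdiff_of_subset hTsub, hTc, card_univ, hn]
      have hne : (univ \ T).Nonempty := by
        rw [← Finset.card_pos, hcompl]; omega
      obtain ⟨t, htmem, htmax⟩ :=
        Finset.exists_max_image (univ \ T) (fun v => (A.filter (fun u => G.Adj v u)).card) hne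
      have htT : t ∉ T := (Finset.mem_sdiff.mp htmem).2
      set m := (A.filter (fun u => G.Adj t u)).card with hm
      have h1 : A.card * δ ≤ ∑ v ∈ univ, (A.filter (fun u => G.Adj v u)).card :=
        sum_nbrsIn_ge G A
      have h2 : ∑ v ∈ univ, (A.filter (fun u => G.Adj v u)).card
          = ∑ v ∈ univ \ T, (A.filter (fun u => G.Adj v u)).card
            + ∑ v ∈ T, (A.filter (fun u => G.Adj v u)).card :=
        (Finset.sum_sdiff hTsub).symm
      have h3 : ∑ v ∈ T, (A.filter (fun u => G.Adj v u)).card ≤ k * A.card := by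
        calc ∑ v ∈ T, (A.filter (fun u => G.Adj v u)).card
            ≤ ∑ _v ∈ T, A.card := Finset.sum_le_sum fun v _ => Finset.card_filter_le _ _
          _ = k * A.card := by rw [Finset.sum_const, hTc, smul_eq_mul]
      have h4 : ∑ v ∈ univ \ T, (A.filter (fun u => G.Adj v u)).card ≤ (n - k) * m := by
        calc ∑ v ∈ univ \ T, (A.filter (fun u => G.Adj v u)).card
            ≤ ∑ _v ∈ univ \ T, m := Finset.sum_le_sum htmax
          _ = (n - k) * m := by rw [Finset.sum_const, hcompl, smul_eq_mul]
      have hkδ : k ≤ δ := by omega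
      have h5 : A.card * (δ - k) ≤ (n - k) * m := by
        have hh : A.card * (δ - k) + k * A.card ≤ (n - k) * m + k * A.card := by
          calc A.card * (δ - k) + k * A.card = A.card * δ := by
                rw [mul_comm k A.card, ← Nat.mul_add, Nat.sub_add_cancel hkδ]
            _ ≤ _ := h1
            _ = _ := h2
            _ ≤ (n - k) * m + k * A.card := Nat.add_le_add h4 h3
        exact Nat.le_of_add_le_add_right hh
      refine ⟨insert t T, by rw [Finset.card_insert_of_notMem htT, hTc], ?_⟩
      have hAt : (univ.filter (fun v => ∀ s ∈ insert t T, G.Adj s v))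
          = A.filter (fun u => G.Adj t u) := by
        ext v
        simp only [hA, Finset.mem_filter, Finset.mem_univ, true_and,
          Finset.forall_mem_insert]
        tauto
      rw [hAt, ← hm, Finset.prod_range_succ, Finset.prod_range_succ]
      calc n * ((∏ j ∈ range k, (δ - j)) * (δ - k))
          = n * (∏ j ∈ range k, (δ - j)) * (δ - k) := by ring
        _ ≤ A.card * (∏ j ∈ range k, (n - j)) * (δ - k) := Nat.mul_le_mul hTinv (le_refl _)
        _ = A.card * (δ - k) * ∏ j ∈ range k, (n - j) := by ring
        _ ≤ (n - k) * m * ∏ j ∈ range k, (n - j) := Nat.mul_le_mul h5 (le_refl _)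
        _ = m * ((∏ j ∈ range k, (n - j)) * (n - k)) := by ring
  obtain ⟨T, hTc, hTinv⟩ := key (r - 1) le_rfl
  set A := univ.filter (fun v => ∀ t ∈ T, G.Adj t v) with hA
  -- numeric hypothesis
  have hd : (r - 1) * 2 ^ (r - 2) + 2 ≤ n / 2 := by
    rw [Nat.le_div_iff_mul_le (by norm_num)]
    calc ((r - 1) * 2 ^ (r - 2) + 2) * 2 = (r - 1) * (2 ^ (r - 2) * 2) + 4 := by ring
      _ = (r - 1) * 2 ^ (r - 1) + 4 := by
          have hre : r - 2 + 1 = r - 1 := by omega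
          rw [← pow_succ, hre]
      _ ≤ n := hbig
  have hnum := numeric_ineq r n (n / 2) δ hr hd (by omega) (by omega) hδbig
  have hAr : r ≤ A.card := by
    by_contra h
    push_neg at h
    have hle : A.card * ∏ j ∈ range (r - 1), (n - j)
        ≤ (r - 1) * ∏ j ∈ range (r - 1), (n - j) :=
      Nat.mul_le_mul (show A.card ≤ r - 1 by omega) (le_refl _)
    exact absurd (lt_of_le_of_lt (hTinv.trans hle) hnum) (lt_irrefl _)
  obtain ⟨S, hSsub, hScard⟩ := Finset.exists_subset_card_eq hAr
  refine ⟨S, T, ?_, hScard, hTc, ?_⟩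
  · rw [Finset.disjoint_left]
    intro s hs hsT
    have hsA := hSsub hs
    rw [hA, Finset.mem_filter] at hsA
    exact G.irrefl (hsA.2 s hsT)
  · intro s hs t ht
    have hsA := hSsub hs
    rw [hA, Finset.mem_filter] at hsA
    exact (hsA.2 t ht).symm
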